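/- Let S be a finite proper set of intervals on the real line (no interval contains another). Then there exists a finite set P of real numbers such that every interval in S contains exactly one point of P. -/
import Mathlib

theorem proper_intervals_aux : ∀ n (S : Finset (ℝ × ℝ)),
    S.card ≤ n →
    (∀ s ∈ S, s.1 ≤ s.2) →
    (∀ s ∈ S, ∀ t ∈ S, s ≠ t → ¬ Set.Icc t.1 t.2 ⊆ Set.Icc s.1 s.2) →
    ∃ P : Finset ℝ, (∀ p ∈ P, ∃ s ∈ S, p = s.2) ∧
      ∀ s ∈ S, ∃! p : ℝ, p ∈ P ∧ p ∈ Set.Icc s.1 s.2 := by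
  intro n
  induction n with
  | zero =>
    intro S hcard _ _
    have : S = ∅ := Finset.card_eq_zero.1 (Nat.le_zero.1 hcard)
    subst this
    exact ⟨∅, by simp, by simp⟩
  | succ n ih =>
    intro S hcard hS proper
    rcases S.eq_empty_or_nonempty with rfl | hne
    · exact ⟨∅, by simp, by simp⟩
    obtain ⟨m, hm, hmin⟩ := S.exists_min_image Prod.snd hne
    set r := m.2 with hr
    set S' := S.filter (fun u => r < u.1) with hS'def
    have hsub : S' ⊆ S := Finset.filter_subset _ _
    have hmnot : m ∉ S' := by
      simp only [hS'def, Finset.mem_filter]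
      exact fun h => absurd h.2 (not_lt.2 (hS m hm))
    have hcard' : S'.card ≤ n := by
      have hss : S' ⊂ S := (Finset.ssubset_iff_of_subset hsub).2 ⟨m, hm, hmnot⟩
      have := Finset.card_lt_card hss
      omega
    obtain ⟨P', hP1, hP2⟩ := ih S' hcard' (fun s hs => hS s (hsub hs))
      (fun s hs t ht => proper s (hsub hs) t (hsub ht))
    refine ⟨insert r P', ?_, ?_⟩
    · intro p hp
      rcases Finset.mem_insert.1 hp with rfl | hp
      · exact ⟨m, hm, rfl⟩
      · obtain ⟨s, hs, h⟩ := hP1 p hp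
        exact ⟨s, hsub hs, h⟩
    · intro s hs
      by_cases hcase : s.1 ≤ r
      · refine ⟨r, ⟨Finset.mem_insert_self _ _, hcase, hmin s hs⟩, ?_⟩
        rintro q ⟨hqP, hq1, hq2⟩
        rcases Finset.mem_insert.1 hqP with rfl | hqP'
        · rfl
        · exfalso
          obtain ⟨u, hu, rfl⟩ := hP1 q hqP'
          have hu' : r < u.1 := (Finset.mem_filter.1 hu).2
          have hune : s ≠ u := by
            intro h
            rw [← h] at hu'
            exact absurd hcase (not_le.2 hu')
          refine proper s hs u (hsub hu) hune ?_
          rintro x ⟨hx1, hx2⟩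
          exact ⟨le_trans (le_trans hcase hu'.le) hx1, le_trans hx2 hq2⟩
      · have hsS' : s ∈ S' := Finset.mem_filter.2 ⟨hs, not_le.1 hcase⟩
        obtain ⟨p, ⟨hpP, hpI⟩, hpu⟩ := hP2 s hsS'
        refine ⟨p, ⟨Finset.mem_insert_of_mem hpP, hpI⟩, ?_⟩
        rintro q ⟨hqP, hqI⟩
        rcases Finset.mem_insert.1 hqP with rfl | hqP'
        · exact absurd hqI.1 hcase
        · exact hpu q ⟨hqP', hqI⟩

/-- A finite proper set of closed intervals (no interval contains another)
admits a finite set `P` of points such that every interval contains exactly one point of `P`. -/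
theorem proper_intervals_exact_piercing (S : Finset (ℝ × ℝ))
    (hS : ∀ s ∈ S, s.1 ≤ s.2)
    (proper : ∀ s ∈ S, ∀ t ∈ S, s ≠ t → ¬ Set.Icc t.1 t.2 ⊆ Set.Icc s.1 s.2) :
    ∃ P : Finset ℝ, ∀ s ∈ S, ∃! p : ℝ, p ∈ P ∧ p ∈ Set.Icc s.1 s.2 := by
  obtain ⟨P, _, h⟩ := proper_intervals_aux S.card S le_rfl hS proper
  exact ⟨P, h⟩
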